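/- Let L ⊆ ℤⁿ be a lattice, I = I_L, and F an I-fiber. Then F is a Markov I-fiber (i.e., there exists a Markov basis S of I and a binomial B ∈ S with F_B ≡_I F) if and only if I_{<F̄} ≠ I_{≤F̄}. -/

import Mathlib

open MvPolynomial

noncomputable section

/-- The integer vector associated to a natural exponent vector. -/
def natVec {ι : Type*} (u : ι →₀ ℕ) : ι → ℤ := fun i => (u i : ℤ)

/-- The lattice ideal `I_L` of a lattice `L ⊆ ℤ^ι` in `k[x_i : i ∈ ι]`. -/
def latticeIdeal (k : Type*) [Field k] {ι : Type*} (L : Submodule ℤ (ι → ℤ)) :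
    Ideal (MvPolynomial ι k) :=
  Ideal.span {f | ∃ u v : ι →₀ ℕ, natVec u - natVec v ∈ L ∧
    f = monomial u (1 : k) - monomial v 1}

/-- `f` is a binomial `x^u - x^v` belonging to the lattice ideal `I_L`. -/
def IsLatticeBinomial (k : Type*) [Field k] {ι : Type*} (L : Submodule ℤ (ι → ℤ))
    (f : MvPolynomial ι k) : Prop :=
  ∃ u v : ι →₀ ℕ, natVec u - natVec v ∈ L ∧ f = monomial u (1 : k) - monomial v 1

/-- The `I_L`-fiber of `u` : all exponent vectors `v` with `v - u ∈ L`. -/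
def fiber {ι : Type*} (L : Submodule ℤ (ι → ℤ)) (u : ι →₀ ℕ) : Set (ι →₀ ℕ) :=
  {v | natVec v - natVec u ∈ L}

/-- `L⁺ = L ∩ ℕ^ι`. -/
def Lplus {ι : Type*} (L : Submodule ℤ (ι → ℤ)) : Set (ι → ℤ) :=
  {w | w ∈ L ∧ ∀ i, 0 ≤ w i}

/-- `L_pure`, the subgroup of `L` generated by `L⁺`. -/
def Lpure {ι : Type*} (L : Submodule ℤ (ι → ℤ)) : Submodule ℤ (ι → ℤ) :=
  Submodule.span ℤ (Lplus L)

/-- `σ_L`, the union of the supports of elements of `L⁺`. -/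
def sigmaL {ι : Type*} (L : Submodule ℤ (ι → ℤ)) : Set ι :=
  {i | ∃ w ∈ Lplus L, w i ≠ 0}

/-- `F̄ ≤_I Ḡ` : some translate of `F` is contained in `G`. -/
def fiberLE {ι : Type*} (F G : Set (ι →₀ ℕ)) : Prop :=
  ∃ t : ι →₀ ℕ, (fun v => t + v) '' F ⊆ G

/-- `F ≡_I G` : equivalence of fibers. -/
def fiberEquiv {ι : Type*} (F G : Set (ι →₀ ℕ)) : Prop :=
  fiberLE F G ∧ fiberLE G F

/-- `F̄ <_I Ḡ`. -/
def fiberLT {ι : Type*} (F G : Set (ι →₀ ℕ)) : Prop :=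
  fiberLE F G ∧ ¬ fiberEquiv F G

/-- The ideal `I_{<F̄}` generated by binomials of `I_L` whose fiber class is `<_I F̄`. -/
def idealLT (k : Type*) [Field k] {ι : Type*} (L : Submodule ℤ (ι → ℤ))
    (F : Set (ι →₀ ℕ)) : Ideal (MvPolynomial ι k) :=
  Ideal.span {f | ∃ u v : ι →₀ ℕ, natVec u - natVec v ∈ L ∧
    f = monomial u (1 : k) - monomial v 1 ∧ fiberLT (fiber L u) F}

/-- The ideal `I_{≤F̄}` generated by binomials of `I_L` whose fiber class is `≤_I F̄`. -/
def idealLE (k : Type*) [Field k] {ι : Type*} (L : Submodule ℤ (ι → ℤ))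
    (F : Set (ι →₀ ℕ)) : Ideal (MvPolynomial ι k) :=
  Ideal.span {f | ∃ u v : ι →₀ ℕ, natVec u - natVec v ∈ L ∧
    f = monomial u (1 : k) - monomial v 1 ∧ fiberLE (fiber L u) F}

/-- `μ(I_L)` : the least cardinality of a binomial generating set of `I_L`. -/
def muIdeal (k : Type*) [Field k] {ι : Type*} (L : Submodule ℤ (ι → ℤ)) : ℕ :=
  sInf {m | ∃ S : Finset (MvPolynomial ι k), S.card = m ∧
    (∀ f ∈ S, IsLatticeBinomial k L f) ∧
    Ideal.span (S : Set (MvPolynomial ι k)) = latticeIdeal k L}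

/-- A Markov basis of `I_L` : a binomial generating set of least cardinality `μ(I_L)`. -/
def IsMarkovBasis (k : Type*) [Field k] {ι : Type*} (L : Submodule ℤ (ι → ℤ))
    (S : Finset (MvPolynomial ι k)) : Prop :=
  (∀ f ∈ S, IsLatticeBinomial k L f) ∧
  Ideal.span (S : Set (MvPolynomial ι k)) = latticeIdeal k L ∧
  S.card = muIdeal k L

/-- `u` is an `L`-primitive vector : `u ≠ 0`, `u ∈ L`, and whenever `q • u ∈ L` for
a rational `q`, then `q` is an integer. -/
def IsLPrimitive {ι : Type*} (L : Submodule ℤ (ι → ℤ)) (u : ι → ℤ) : Prop :=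
  u ≠ 0 ∧ u ∈ L ∧ ∀ (q : ℚ) (w : ι → ℤ), w ∈ L →
    (∀ i, (w i : ℚ) = q * (u i : ℚ)) → ∃ m : ℤ, q = (m : ℚ)

/-- Projection onto the coordinates in `σ_L`. -/
def projSigma {n : ℕ} (L : Submodule ℤ (Fin n → ℤ)) :
    (Fin n → ℤ) →ₗ[ℤ] ({i : Fin n // i ∈ sigmaL L} → ℤ) :=
  LinearMap.pi fun j => LinearMap.proj j.1

/-- Projection onto the coordinates outside `σ_L` (giving `u ↦ u^σ`). -/
def projCompl {n : ℕ} (L : Submodule ℤ (Fin n → ℤ)) :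
    (Fin n → ℤ) →ₗ[ℤ] ({i : Fin n // i ∉ sigmaL L} → ℤ) :=
  LinearMap.pi fun j => LinearMap.proj j.1

/-- An indispensable binomial: it appears, up to a constant multiple, in every Markov basis. -/
def IsIndispensableBinomial (k : Type*) [Field k] {ι : Type*} (L : Submodule ℤ (ι → ℤ))
    (f : MvPolynomial ι k) : Prop :=
  ∀ S : Finset (MvPolynomial ι k), IsMarkovBasis k L S → ∃ c : k, c ≠ 0 ∧ c • f ∈ S

/-- An indispensable monomial: every Markov basis contains a binomial having it as a term. -/
def IsIndispensableMonomial (k : Type*) [Field k] {ι : Type*} (L : Submodule ℤ (ι → ℤ))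
    (u : ι →₀ ℕ) : Prop :=
  ∀ S : Finset (MvPolynomial ι k), IsMarkovBasis k L S → ∃ f ∈ S, ∃ v : ι →₀ ℕ,
    f = monomial u (1 : k) - monomial v 1 ∨ f = monomial v (1 : k) - monomial u 1


/-! ### Auxiliary lemmas -/

section Aux

variable {k : Type*} [Field k] {ι : Type*}

lemma natVec_add (a b : ι →₀ ℕ) : natVec (a + b) = natVec a + natVec b := by
  funext i; simp [natVec]

lemma fiber_eq_of_mem {L : Submodule ℤ (ι → ℤ)} {u v : ι →₀ ℕ}
    (h : natVec u - natVec v ∈ L) : fiber L u = fiber L v := by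
  ext z
  constructor <;> intro hz
  · have h2 := L.add_mem (hz : natVec z - natVec u ∈ L) h
    rw [sub_add_sub_cancel] at h2
    exact h2
  · have h2 := L.sub_mem (hz : natVec z - natVec v ∈ L) h
    have heq : natVec z - natVec v - (natVec u - natVec v) = natVec z - natVec u := by abel
    rw [heq] at h2
    exact h2

lemma fiberLE_trans {F G H : Set (ι →₀ ℕ)} (h1 : fiberLE F G) (h2 : fiberLE G H) :
    fiberLE F H := by
  obtain ⟨t, ht⟩ := h1; obtain ⟨s, hs⟩ := h2
  refine ⟨s + t, ?_⟩
  rintro z ⟨x, hx, rfl⟩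
  have h3 : t + x ∈ G := ht ⟨x, hx, rfl⟩
  have h4 : s + (t + x) ∈ H := hs ⟨t + x, h3, rfl⟩
  simpa [add_assoc] using h4

lemma fiberLE_of_translate {L : Submodule ℤ (ι → ℤ)} {t a u : ι →₀ ℕ}
    (h : natVec (t + a) - natVec u ∈ L) : fiberLE (fiber L a) (fiber L u) := by
  refine ⟨t, ?_⟩
  rintro z ⟨x, hx, rfl⟩
  have h2 := L.add_mem (hx : natVec x - natVec a ∈ L) h
  show natVec (t + x) - natVec u ∈ L
  have heq : natVec (t + x) - natVec u
      = natVec x - natVec a + (natVec (t + a) - natVec u) := by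
    rw [natVec_add, natVec_add]; abel
  rw [heq]; exact h2

/-- The one-step move relation associated to a set `S` of binomials. -/
def moveRel (k : Type*) [Field k] {ι : Type*} (L : Submodule ℤ (ι → ℤ))
    (S : Set (MvPolynomial ι k)) (w w' : ι →₀ ℕ) : Prop :=
  ∃ t a b : ι →₀ ℕ, natVec a - natVec b ∈ L ∧
    (monomial a (1 : k) - monomial b 1) ∈ S ∧ w = t + a ∧ w' = t + b

lemma psi_apply_monomial (L : Submodule ℤ (ι → ℤ)) (S : Set (MvPolynomial ι k))
    (m : ι →₀ ℕ) (c : k) :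
    ((Finsupp.mapDomain.addMonoidHom (Quot.mk (moveRel k L S))).comp
      (AddMonoidAlgebra.coeffAddEquiv : MvPolynomial ι k ≃+ ((ι →₀ ℕ) →₀ k)).toAddMonoidHom) (monomial m c)
      = Finsupp.single (Quot.mk (moveRel k L S) m) c := by
  exact Finsupp.mapDomain_single

lemma psi_span_eq_zero (L : Submodule ℤ (ι → ℤ)) (S : Finset (MvPolynomial ι k))
    (hS : ∀ f ∈ S, IsLatticeBinomial k L f) {p : MvPolynomial ι k}
    (hp : p ∈ Ideal.span (S : Set (MvPolynomial ι k))) :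
    ((Finsupp.mapDomain.addMonoidHom
      (Quot.mk (moveRel k L (S : Set (MvPolynomial ι k))))).comp
      (AddMonoidAlgebra.coeffAddEquiv : MvPolynomial ι k ≃+ ((ι →₀ ℕ) →₀ k)).toAddMonoidHom) p = 0 := by
  suffices h : ∀ r : MvPolynomial ι k,
      ((Finsupp.mapDomain.addMonoidHom
        (Quot.mk (moveRel k L (S : Set (MvPolynomial ι k))))).comp
        (AddMonoidAlgebra.coeffAddEquiv : MvPolynomial ι k ≃+ ((ι →₀ ℕ) →₀ k)).toAddMonoidHom) (r * p) = 0 by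
    simpa using h 1
  induction hp using Submodule.span_induction with
  | mem f hf =>
    intro r
    obtain ⟨a, b, hab, rfl⟩ := hS f hf
    induction r using MvPolynomial.induction_on' with
    | monomial t c =>
      rw [mul_sub, monomial_mul, monomial_mul, mul_one, map_sub,
        psi_apply_monomial, psi_apply_monomial]
      have hq : Quot.mk (moveRel k L (S : Set (MvPolynomial ι k))) (t + a)
          = Quot.mk (moveRel k L (S : Set (MvPolynomial ι k))) (t + b) :=
        Quot.sound ⟨t, a, b, hab, hf, rfl, rfl⟩
      rw [hq, sub_self]
    | add p1 p2 ih1 ih2 =>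
      rw [add_mul, map_add, ih1, ih2, add_zero]
  | zero => intro r; rw [mul_zero, map_zero]
  | add x y hx hy ihx ihy => intro r; rw [mul_add, map_add, ihx r, ihy r, add_zero]
  | smul a x hx ih => intro r; rw [smul_eq_mul, ← mul_assoc]; exact ih (r * a)

lemma chain_mem (L : Submodule ℤ (ι → ℤ)) (S : Finset (MvPolynomial ι k)) (u : ι →₀ ℕ)
    {w w' : ι →₀ ℕ}
    (h : Relation.EqvGen (moveRel k L (S : Set (MvPolynomial ι k))) w w') :
    natVec w - natVec w' ∈ L ∧ (natVec w - natVec u ∈ L →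
      (monomial w (1 : k) - monomial w' 1) ∈ Ideal.span
        {g : MvPolynomial ι k | g ∈ S ∧ ∃ a b : ι →₀ ℕ, natVec a - natVec b ∈ L ∧
          g = monomial a (1 : k) - monomial b 1 ∧ fiberLE (fiber L a) (fiber L u)}) := by
  induction h with
  | rel x y hxy =>
    obtain ⟨t, a, b, hab, hgS, rfl, rfl⟩ := hxy
    constructor
    · have heq : natVec (t + a) - natVec (t + b) = natVec a - natVec b := by
        rw [natVec_add, natVec_add]; abel
      rw [heq]; exact hab
    · intro hw
      have hle : fiberLE (fiber L a) (fiber L u) := fiberLE_of_translate hw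
      have hmono : monomial (t + a) (1 : k) - monomial (t + b) 1
          = monomial t 1 * (monomial a 1 - monomial b 1) := by
        rw [mul_sub, monomial_mul, monomial_mul, one_mul]
      rw [hmono]
      exact Ideal.mul_mem_left _ _ (Ideal.subset_span ⟨hgS, a, b, hab, rfl, hle⟩)
  | refl x =>
    refine ⟨by simpa using L.zero_mem, fun _ => by simp⟩
  | symm x y _ ih =>
    obtain ⟨h1, h2⟩ := ih
    refine ⟨by simpa using L.neg_mem h1, ?_⟩
    intro hy
    have hx : natVec x - natVec u ∈ L := by
      have h3 := L.add_mem h1 hy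
      rwa [sub_add_sub_cancel] at h3
    have hneg : monomial y (1 : k) - monomial x 1
        = -(monomial x (1 : k) - monomial y 1) := by ring
    rw [hneg]
    exact neg_mem (h2 hx)
  | trans x y z _ _ ih1 ih2 =>
    obtain ⟨h1, h2⟩ := ih1
    obtain ⟨h3, h4⟩ := ih2
    have hxz : natVec x - natVec z ∈ L := by
      rw [← sub_add_sub_cancel (natVec x) (natVec y) (natVec z)]
      exact L.add_mem h1 h3
    refine ⟨hxz, ?_⟩
    intro hx
    have hy : natVec y - natVec u ∈ L := by
      have h5 := L.add_mem (L.neg_mem h1) hx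
      rwa [neg_sub, sub_add_sub_cancel] at h5
    have hsplit : monomial x (1 : k) - monomial z 1
        = (monomial x (1 : k) - monomial y 1) + (monomial y (1 : k) - monomial z 1) := by
      ring
    rw [hsplit]
    exact add_mem (h2 hx) (h4 hy)

/-- The path lemma: a binomial in the ideal generated by `S` lies in the ideal generated
by those elements of `S` whose fiber is `≤` its fiber. -/
lemma lemmaA (L : Submodule ℤ (ι → ℤ)) (S : Finset (MvPolynomial ι k))
    (hS : ∀ f ∈ S, IsLatticeBinomial k L f) {u v : ι →₀ ℕ}
    (hmem : monomial u (1 : k) - monomial v 1 ∈ Ideal.span (S : Set (MvPolynomial ι k))) :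
    monomial u (1 : k) - monomial v 1 ∈ Ideal.span
      {g : MvPolynomial ι k | g ∈ S ∧ ∃ a b : ι →₀ ℕ, natVec a - natVec b ∈ L ∧
        g = monomial a (1 : k) - monomial b 1 ∧ fiberLE (fiber L a) (fiber L u)} := by
  have h0 := psi_span_eq_zero L S hS hmem
  rw [map_sub, psi_apply_monomial, psi_apply_monomial] at h0
  have hq : Quot.mk (moveRel k L (S : Set (MvPolynomial ι k))) u
      = Quot.mk (moveRel k L (S : Set (MvPolynomial ι k))) v := by
    by_contra hne
    have h1 := congrArg
      (fun g => g (Quot.mk (moveRel k L (S : Set (MvPolynomial ι k))) u)) h0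
    simp only [Finsupp.sub_apply, Finsupp.single_eq_same, Finsupp.coe_zero,
      Pi.zero_apply] at h1
    rw [Finsupp.single_eq_of_ne hne] at h1
    simp at h1
  have hEq := Quot.eq.mp hq
  exact (chain_mem L S u hEq).2 (by simpa using L.zero_mem)

lemma binomial_exponents {u v a b : ι →₀ ℕ}
    (h : monomial u (1 : k) - monomial v 1 = monomial a (1 : k) - monomial b 1)
    (huv : u ≠ v) : a = u ∨ a = v := by
  classical
  by_contra hc
  push_neg at hc
  have hab : a ≠ b := by
    rintro rfl
    rw [sub_self, sub_eq_zero] at h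
    have h1 := congrArg (MvPolynomial.coeff u) h
    simp only [MvPolynomial.coeff_monomial, if_pos rfl] at h1
    rw [if_neg (Ne.symm huv)] at h1
    exact one_ne_zero h1
  have h2 := congrArg (MvPolynomial.coeff a) h
  simp only [MvPolynomial.coeff_sub, MvPolynomial.coeff_monomial, if_pos rfl] at h2
  rw [if_neg (Ne.symm hc.1), if_neg (Ne.symm hc.2), if_neg (Ne.symm hab)] at h2
  simp at h2

lemma exists_markovBasis (k : Type*) [Field k] {n : ℕ} (L : Submodule ℤ (Fin n → ℤ)) :
    ∃ S : Finset (MvPolynomial (Fin n) k), IsMarkovBasis k L S := by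
  classical
  have hG : latticeIdeal k L = Ideal.span {f : MvPolynomial (Fin n) k |
      ∃ u v : Fin n →₀ ℕ, natVec u - natVec v ∈ L ∧
        f = monomial u (1 : k) - monomial v 1} := rfl
  have hfg : (latticeIdeal k L).FG := IsNoetherian.noetherian (latticeIdeal k L)
  obtain ⟨T, hT⟩ := hfg
  have key : ∀ t : MvPolynomial (Fin n) k, ∃ Ft : Finset (MvPolynomial (Fin n) k),
      ↑Ft ⊆ {f : MvPolynomial (Fin n) k | ∃ u v : Fin n →₀ ℕ, natVec u - natVec v ∈ L ∧
        f = monomial u (1 : k) - monomial v 1} ∧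
      (t ∈ T → t ∈ Ideal.span (Ft : Set (MvPolynomial (Fin n) k))) := by
    intro t
    by_cases ht : t ∈ T
    · have htI : t ∈ latticeIdeal k L := by
        rw [← hT]; exact Ideal.subset_span (Finset.mem_coe.mpr ht)
      rw [hG] at htI
      obtain ⟨Ft, hsub, hmem⟩ := Submodule.mem_span_finite_of_mem_span htI
      exact ⟨Ft, hsub, fun _ => hmem⟩
    · exact ⟨∅, by simp, fun h => absurd h ht⟩
  choose Ft hFtsub hFtmem using key
  set F : Finset (MvPolynomial (Fin n) k) := T.biUnion Ft with hF
  have hFsub : (F : Set (MvPolynomial (Fin n) k)) ⊆ {f : MvPolynomial (Fin n) k |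
      ∃ u v : Fin n →₀ ℕ, natVec u - natVec v ∈ L ∧
        f = monomial u (1 : k) - monomial v 1} := by
    intro g hg
    rw [Finset.mem_coe, hF, Finset.mem_biUnion] at hg
    obtain ⟨t, _, hgt⟩ := hg
    exact hFtsub t (Finset.mem_coe.mpr hgt)
  have hFspan : Ideal.span (F : Set (MvPolynomial (Fin n) k)) = latticeIdeal k L := by
    apply le_antisymm
    · rw [Ideal.span_le, hG]
      intro g hg
      exact Ideal.subset_span (hFsub hg)
    · rw [← hT, Ideal.span_le]
      intro t ht
      exact Ideal.span_mono
        (Finset.coe_subset.mpr (Finset.subset_biUnion_of_mem Ft ht))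
        (hFtmem t (Finset.mem_coe.mp ht))
  have hne : {m : ℕ | ∃ S : Finset (MvPolynomial (Fin n) k), S.card = m ∧
      (∀ f ∈ S, IsLatticeBinomial k L f) ∧
      Ideal.span (S : Set (MvPolynomial (Fin n) k)) = latticeIdeal k L}.Nonempty :=
    ⟨F.card, F, rfl, fun f hf => hFsub (Finset.mem_coe.mpr hf), hFspan⟩
  obtain ⟨S, hcard, hbin, hspan⟩ := Nat.sInf_mem hne
  exact ⟨S, hbin, hspan, hcard⟩

end Aux

/-- a fiber `F` is a Markov `I`-fiber (some Markov basis contains a binomial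
with fiber equivalent to `F`) iff `I_{<F̄} ≠ I_{≤F̄}`. -/
theorem stmt10 (k : Type*) [Field k] {n : ℕ} (L : Submodule ℤ (Fin n → ℤ))
    (w : Fin n →₀ ℕ) :
    (∃ S : Finset (MvPolynomial (Fin n) k), IsMarkovBasis k L S ∧
       ∃ f ∈ S, ∃ u v : Fin n →₀ ℕ, natVec u - natVec v ∈ L ∧
         f = monomial u (1 : k) - monomial v 1 ∧ fiberEquiv (fiber L u) (fiber L w)) ↔
    idealLT k L (fiber L w) ≠ idealLE k L (fiber L w)  := by
  classical
  constructor
  · rintro ⟨S, ⟨hbin, hspan, hcard⟩, f, hfS, u, v, huv, hf, hequiv⟩ heq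
    have hfLE : f ∈ idealLE k L (fiber L w) :=
      Ideal.subset_span ⟨u, v, huv, hf, hequiv.1⟩
    have hfLT : f ∈ idealLT k L (fiber L w) := heq ▸ hfLE
    have hLTle : idealLT k L (fiber L w)
        ≤ Ideal.span ((S.erase f : Finset (MvPolynomial (Fin n) k)) :
            Set (MvPolynomial (Fin n) k)) := by
      rw [idealLT, Ideal.span_le]
      rintro C ⟨a, b, hab, rfl, hlt⟩
      have hCmem : monomial a (1 : k) - monomial b 1
          ∈ Ideal.span (S : Set (MvPolynomial (Fin n) k)) := by
        rw [hspan]; exact Ideal.subset_span ⟨a, b, hab, rfl⟩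
      have hA := lemmaA L S hbin hCmem
      refine Ideal.span_le.mpr ?_ hA
      rintro g ⟨hgS, a', b', ha'b', rfl, hle'⟩
      by_cases hgf : (monomial a' (1 : k) - monomial b' 1) = f
      · by_cases huveq : u = v
        · -- here f = 0, so g = f = 0 lies in any ideal
          rw [hgf, hf, huveq, sub_self]
          exact Submodule.zero_mem _
        · exfalso
          have hfeq : monomial u (1 : k) - monomial v 1
              = monomial a' 1 - monomial b' 1 := by rw [← hf, hgf]
          rcases binomial_exponents hfeq huveq with rfl | rfl
          · exact hlt.2 ⟨hlt.1, fiberLE_trans hequiv.2 hle'⟩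
          · rw [← fiber_eq_of_mem huv] at hle'
            exact hlt.2 ⟨hlt.1, fiberLE_trans hequiv.2 hle'⟩
      · exact Ideal.subset_span
          (Finset.mem_coe.mpr (Finset.mem_erase.mpr ⟨hgf, hgS⟩))
    have hferase : f ∈ Ideal.span ((S.erase f : Finset (MvPolynomial (Fin n) k)) :
        Set (MvPolynomial (Fin n) k)) := hLTle hfLT
    have hspanerase : Ideal.span ((S.erase f : Finset (MvPolynomial (Fin n) k)) :
        Set (MvPolynomial (Fin n) k)) = latticeIdeal k L := by
      apply le_antisymm
      · rw [← hspan]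
        exact Ideal.span_mono (Finset.coe_subset.mpr (Finset.erase_subset f S))
      · rw [← hspan, Ideal.span_le]
        intro g hg
        by_cases hgf : g = f
        · subst hgf; exact hferase
        · exact Ideal.subset_span
            (Finset.mem_coe.mpr (Finset.mem_erase.mpr ⟨hgf, Finset.mem_coe.mp hg⟩))
    have hmu : muIdeal k L ≤ (S.erase f).card :=
      Nat.sInf_le ⟨S.erase f, rfl,
        fun g hg => hbin g (Finset.erase_subset f S hg), hspanerase⟩
    have hpos : 0 < S.card := Finset.card_pos.mpr ⟨f, hfS⟩
    rw [Finset.card_erase_of_mem hfS, ← hcard] at hmu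
    omega
  · intro hne
    obtain ⟨S, hbin, hspan, hcard⟩ := exists_markovBasis k L
    have hsub : idealLT k L (fiber L w) ≤ idealLE k L (fiber L w) := by
      rw [idealLT, Ideal.span_le]
      rintro C ⟨a, b, hab, rfl, hlt⟩
      exact Ideal.subset_span ⟨a, b, hab, rfl, hlt.1⟩
    have hex : ∃ u v : Fin n →₀ ℕ, natVec u - natVec v ∈ L ∧
        fiberLE (fiber L u) (fiber L w) ∧
        monomial u (1 : k) - monomial v 1 ∉ idealLT k L (fiber L w) := by
      by_contra hno
      push_neg at hno
      apply hne
      refine le_antisymm hsub ?_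
      rw [idealLE, Ideal.span_le]
      rintro C ⟨a, b, hab, rfl, hle⟩
      exact hno a b hab hle
    obtain ⟨u, v, huv, hle, hnot⟩ := hex
    have hmem : monomial u (1 : k) - monomial v 1
        ∈ Ideal.span (S : Set (MvPolynomial (Fin n) k)) := by
      rw [hspan]; exact Ideal.subset_span ⟨u, v, huv, rfl⟩
    have hA := lemmaA L S hbin hmem
    by_contra hno2
    apply hnot
    refine Ideal.span_le.mpr ?_ hA
    rintro g ⟨hgS, a, b, hab, rfl, hle'⟩
    have hlew : fiberLE (fiber L a) (fiber L w) := fiberLE_trans hle' hle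
    have hneq : ¬ fiberEquiv (fiber L a) (fiber L w) := by
      intro heqv
      exact hno2 ⟨S, ⟨hbin, hspan, hcard⟩,
        monomial a (1 : k) - monomial b 1, hgS, a, b, hab, rfl, heqv⟩
    exact Ideal.subset_span ⟨a, b, hab, rfl, ⟨hlew, hneq⟩⟩
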